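/- Let n ≥ 1 and μ > −1/2. Then ∫_{ℝⁿ} exp(−Σᵢ₌₁ⁿ λᵢ²)·∏ᵢ₌₁ⁿ |λᵢ|^{2μ}·∏_{1≤i<j≤n} (λᵢ−λⱼ)² dλ₁…dλₙ = n!·∏_{k=0}^{n−1} γ_μ(k), where γ_μ(2m) = m!·Γ(m + μ + 1/2) and γ_μ(2m+1) = m!·Γ(m + μ + 3/2). -/

import Mathlib

open MeasureTheory Real Filter Topology Finset Matrix

/-- `γ_μ(2m) = m!·Γ(m + μ + 1/2)` and `γ_μ(2m+1) = m!·Γ(m + μ + 3/2)`. -/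
noncomputable def gam (μ : ℝ) (k : ℕ) : ℝ :=
  if k % 2 = 0 then (Nat.factorial (k / 2) : ℝ) * Real.Gamma ((k / 2 : ℕ) + μ + 1 / 2)
  else (Nat.factorial (k / 2) : ℝ) * Real.Gamma ((k / 2 : ℕ) + μ + 3 / 2)

noncomputable def wfun (μ : ℝ) (t : ℝ) : ℝ := |t| ^ (2*μ) * Real.exp (-t^2)
noncomputable def mom (μ : ℝ) (k : ℕ) : ℝ := ∫ t : ℝ, t ^ k * wfun μ t

lemma integrable_comp_abs {f : ℝ → ℝ} (hf : IntegrableOn f (Set.Ioi 0)) :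
    Integrable (fun x => f |x|) := by
  have int_Ioi : IntegrableOn (fun x ↦ f |x|) (Set.Ioi 0) := by
    apply hf.congr_fun (fun x hx => ?_) measurableSet_Ioi
    rw [abs_eq_self.mpr (le_of_lt hx)]
  have int_Iic : IntegrableOn (fun x ↦ f |x|) (Set.Iic 0) := by
    rw [← Measure.map_neg_eq_self (volume : Measure ℝ)]
    let m : MeasurableEmbedding fun x : ℝ => -x := (Homeomorph.neg ℝ).measurableEmbedding
    rw [m.integrableOn_map_iff]
    simp_rw [Function.comp_def, abs_neg, Set.neg_preimage, Set.neg_Iic, neg_zero]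
    exact Iff.mpr integrableOn_Ici_iff_integrableOn_Ioi int_Ioi
  rw [← integrableOn_univ, ← Set.Iic_union_Ioi (a := (0:ℝ)), integrableOn_union]
  exact ⟨int_Iic, int_Ioi⟩

lemma ae_ne_zero : ∀ᵐ x : ℝ, x ≠ 0 := by
  rw [ae_iff]
  simp only [ne_eq, not_not]
  rw [show {x : ℝ | x = 0} = {0} from Set.setOf_eq_eq_singleton]
  exact Real.volume_singleton

variable {μ : ℝ} (hμ : -(1/2 : ℝ) < μ)

include hμ in
lemma mom_integrable (k : ℕ) : Integrable (fun t : ℝ => t ^ k * wfun μ t) := by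
  have hsum : (-1 : ℝ) < 2*μ + k := by
    have : (0:ℝ) ≤ k := Nat.cast_nonneg k
    linarith
  have hbound : Integrable (fun x : ℝ => (fun t : ℝ => t ^ (2*μ + k) * Real.exp (-t^2)) |x|) := by
    apply integrable_comp_abs (f := fun t : ℝ => t ^ (2*μ + (k:ℝ)) * Real.exp (-t^2))
    exact integrableOn_rpow_mul_exp_neg_mul_sq one_pos hsum |>.congr_fun
      (fun x hx => by simp only [neg_one_mul]) measurableSet_Ioi
  apply hbound.mono'
  · apply Measurable.aestronglyMeasurable
    apply (measurable_id.pow_const k).mul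
    exact ((measurable_abs.pow measurable_const).mul (measurable_id.pow_const 2).neg.exp)
  · filter_upwards [ae_ne_zero] with x hx
    have hx' : 0 < |x| := abs_pos.mpr hx
    simp only [wfun, Real.norm_eq_abs, abs_mul, abs_pow, abs_abs, sq_abs]
    rw [abs_of_nonneg (Real.rpow_nonneg (abs_nonneg x) _),
      abs_of_nonneg (Real.exp_pos _).le, Real.rpow_add hx', Real.rpow_natCast]
    apply le_of_eq; ring


include hμ in
lemma mom_even (m : ℕ) : mom μ (2*m) = Real.Gamma (m + μ + 1/2) := by
  have hq : (-1:ℝ) < 2*μ + (2*m : ℕ) := by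
    have : (0:ℝ) ≤ (2*m : ℕ) := Nat.cast_nonneg _
    linarith
  have step1 : mom μ (2*m) =
      ∫ x : ℝ, (fun t : ℝ => t ^ (2*μ + ((2*m : ℕ):ℝ)) * Real.exp (-t^2)) |x| := by
    rw [mom]
    apply integral_congr_ae
    filter_upwards [ae_ne_zero] with x hx
    have hx' : 0 < |x| := abs_pos.mpr hx
    simp only [wfun, sq_abs]
    rw [Real.rpow_add hx', Real.rpow_natCast]
    have hxp : x ^ (2*m) = |x| ^ (2*m) := by
      rw [pow_mul, pow_mul, sq_abs]
    rw [hxp]; ring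
  rw [step1, integral_comp_abs (f := fun t : ℝ => t ^ (2*μ + ((2*m : ℕ):ℝ)) * Real.exp (-t^2))]
  have step2 : ∫ x in Set.Ioi (0:ℝ), x ^ (2*μ + ((2*m : ℕ):ℝ)) * Real.exp (-x^2)
      = ∫ x in Set.Ioi (0:ℝ), x ^ (2*μ + ((2*m : ℕ):ℝ)) * Real.exp (-x^(2:ℝ)) := by
    apply setIntegral_congr_fun measurableSet_Ioi (fun x hx => ?_)
    rw [show x ^ (2:ℝ) = x ^ (2:ℕ) from Real.rpow_natCast x 2]
  rw [step2, integral_rpow_mul_exp_neg_rpow two_pos hq]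
  rw [← mul_assoc]
  norm_num
  congr 1
  push_cast
  ring

include hμ in
lemma mom_odd (m : ℕ) : mom μ (2*m+1) = 0 := by
  set F := fun x : ℝ => x ^ (2*m+1) * wfun μ x with hF
  have hint := mom_integrable hμ (2*m+1)
  have hodd : ∀ x : ℝ, F (-x) = - F x := by
    intro x
    simp only [hF, wfun, abs_neg, neg_sq]
    rw [Odd.neg_pow ⟨m, by ring⟩]
    ring
  have h1 : ∫ x in Set.Iic (0:ℝ), F x = - ∫ x in Set.Ioi (0:ℝ), F x := by
    have h2 : ∫ x in Set.Iic (0:ℝ), F x = ∫ x in Set.Iic (0:ℝ), - F (-x) := by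
      apply setIntegral_congr_fun measurableSet_Iic (fun x _ => ?_)
      rw [hodd, neg_neg]
    rw [h2, integral_neg, integral_comp_neg_Iic, neg_zero]
  have h3 := intervalIntegral.integral_Iic_add_Ioi (b := (0:ℝ)) (μ := volume) (f := F)
    hint.integrableOn hint.integrableOn
  have : mom μ (2*m+1) = ∫ x : ℝ, F x := rfl
  rw [this, ← h3, h1, neg_add_cancel]

lemma nat_desc_prod (jn : ℕ) : ∏ v ∈ range jn, ((jn:ℝ) - v) = (Nat.factorial jn : ℝ) := by
  calc ∏ v ∈ range jn, ((jn:ℝ) - v)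
      = ∏ v ∈ range jn, (((jn - v : ℕ)) : ℝ) :=
        Finset.prod_congr rfl (fun v hv => by rw [Nat.cast_sub (Finset.mem_range.1 hv).le])
    _ = ((∏ v ∈ range jn, (jn - v) : ℕ) : ℝ) := by rw [Nat.cast_prod]
    _ = (Nat.factorial jn : ℝ) := by
        rw [← Nat.descFactorial_eq_prod_range, Nat.descFactorial_self]

lemma vdm_nat (m : ℕ) :
    ∏ i : Fin m, ∏ j ∈ Ioi i, ((j:ℝ) - (i:ℝ)) = ∏ k ∈ range m, (Nat.factorial k : ℝ) := by
  rw [Finset.prod_comm' (t' := (univ : Finset (Fin m))) (s' := fun j => Iio j)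
    (fun x y => by simp [Finset.mem_Ioi, Finset.mem_Iio, and_comm])]
  have inner : ∀ j : Fin m, ∏ i ∈ Iio j, ((j:ℝ) - (i:ℝ)) = (Nat.factorial (j:ℕ) : ℝ) := by
    intro j
    rw [show (∏ i ∈ Iio j, ((j:ℝ) - (i:ℝ)))
        = ∏ v ∈ (Iio j).map Fin.valEmbedding, ((j:ℝ) - v) from (Finset.prod_map (Iio j) Fin.valEmbedding (fun v : ℕ => ((j:ℝ) - v))).symm,
      Fin.map_valEmbedding_Iio, Nat.Iio_eq_range, nat_desc_prod]
  rw [Finset.prod_congr rfl (fun j _ => inner j),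
    Fin.prod_univ_eq_prod_range (fun k => (Nat.factorial k : ℝ)) m]

lemma gamma_fact (a : ℝ) (ha : 0 < a) (i j : ℕ) :
    Real.Gamma ((i:ℝ) + j + a) = Real.Gamma (j + a) * ∏ t ∈ range i, ((j:ℝ) + (a + t)) := by
  induction i with
  | zero => simp
  | succ i ih =>
    have h1 : ((i+1:ℕ):ℝ) + j + a = ((i:ℝ) + j + a) + 1 := by push_cast; ring
    have hpos : (0:ℝ) < (i:ℝ) + j + a := by positivity
    rw [h1, Real.Gamma_add_one (ne_of_gt hpos), ih, Finset.prod_range_succ]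
    ring

lemma det_gamma_hankel (m : ℕ) (a : ℝ) (ha : 0 < a) :
    Matrix.det (Matrix.of fun i j : Fin m => Real.Gamma ((i:ℝ) + (j:ℝ) + a)) =
      ∏ k ∈ range m, (Nat.factorial k : ℝ) * Real.Gamma ((k:ℝ) + a) := by
  set p : Fin m → Polynomial ℝ :=
    fun i => ∏ t ∈ range (i:ℕ), (Polynomial.X + Polynomial.C (a + t)) with hp
  have hmonic : ∀ i, (p i).Monic :=
    fun i => Polynomial.monic_prod_of_monic _ _ (fun t _ => Polynomial.monic_X_add_C _)
  have hdeg : ∀ i : Fin m, (p i).natDegree = (i:ℕ) := by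
    intro i
    rw [hp, Polynomial.natDegree_prod_of_monic _ _ (fun t _ => Polynomial.monic_X_add_C _),
      ]
    simp only [Polynomial.natDegree_X_add_C, Finset.sum_const, smul_eq_mul, mul_one,
      Finset.card_range]
  have heval : ∀ (i : Fin m) (x : ℝ), (p i).eval x = ∏ t ∈ range (i:ℕ), (x + (a + t)) := by
    intro i x
    rw [hp]
    simp [Polynomial.eval_prod]
  have hmat : (Matrix.of fun i j : Fin m => Real.Gamma ((i:ℝ) + (j:ℝ) + a)) =
      (Matrix.of fun i j : Fin m => Real.Gamma ((j:ℝ) + a) *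
        (Matrix.of fun i j : Fin m => (p i).eval ((j:ℕ):ℝ)) i j) := by
    ext i j
    simp only [Matrix.of_apply]
    rw [heval, ← gamma_fact a ha i j]
  rw [hmat, Matrix.det_mul_row]
  have htrans : (Matrix.of fun i j : Fin m => (p i).eval ((j:ℕ):ℝ)) =
      (Matrix.of fun i j : Fin m => (p j).eval (((i:Fin m):ℕ):ℝ))ᵀ := by
    ext i j
    rfl
  rw [htrans, Matrix.det_transpose,
    ← Matrix.det_eval_matrixOfPolynomials_eq_det_vandermonde
      (fun i : Fin m => ((i:ℕ):ℝ)) p hdeg hmonic,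
    Matrix.det_vandermonde]
  rw [vdm_nat, ← Fin.prod_univ_eq_prod_range (fun k => (Nat.factorial k : ℝ)) m,
    ← Fin.prod_univ_eq_prod_range (fun k => (Nat.factorial k : ℝ) * Real.Gamma ((k:ℝ) + a)) m,
    ← Finset.prod_mul_distrib]
  exact Finset.prod_congr rfl (fun i _ => by ring)

include hμ in
lemma det_mom (n : ℕ) :
    Matrix.det (Matrix.of fun i j : Fin n => mom μ ((i:ℕ) + (j:ℕ))) =
      (∏ k ∈ range ((n+1)/2), (Nat.factorial k : ℝ) * Real.Gamma ((k:ℝ) + (μ + 1/2))) *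
      (∏ k ∈ range (n/2), (Nat.factorial k : ℝ) * Real.Gamma ((k:ℝ) + (μ + 3/2))) := by
  set e := (n+1)/2 with he
  set o := n/2 with ho
  have hlt1 : ∀ i : Fin e, 2*(i:ℕ) < n := fun i => by have := i.isLt; omega
  have hlt2 : ∀ i : Fin o, 2*(i:ℕ)+1 < n := fun i => by have := i.isLt; omega
  let f : Fin e ⊕ Fin o → Fin n := Sum.elim (fun i => ⟨2*i, hlt1 i⟩) (fun i => ⟨2*i+1, hlt2 i⟩)
  have hinj : Function.Injective f := by
    rintro (i|i) (j|j) h <;>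
      simp only [f, Sum.elim_inl, Sum.elim_inr, Fin.mk.injEq] at h <;>
      first
        | (congr 1; exact Fin.ext (by omega))
        | omega
  have hbij : Function.Bijective f := by
    rw [Fintype.bijective_iff_injective_and_card]
    refine ⟨hinj, ?_⟩
    simp only [Fintype.card_sum, Fintype.card_fin]
    omega
  let E : Fin e ⊕ Fin o ≃ Fin n := Equiv.ofBijective f hbij
  rw [← Matrix.det_submatrix_equiv_self E]
  have hE1 : ∀ i : Fin e, ((E (Sum.inl i) : Fin n) : ℕ) = 2*(i:ℕ) := fun i => rfl
  have hE2 : ∀ i : Fin o, ((E (Sum.inr i) : Fin n) : ℕ) = 2*(i:ℕ)+1 := fun i => rfl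
  have hblocks : (Matrix.of fun i j : Fin n => mom μ ((i:ℕ)+(j:ℕ))).submatrix E E =
      Matrix.fromBlocks
        (Matrix.of fun i j : Fin e => Real.Gamma ((i:ℝ) + (j:ℝ) + (μ + 1/2)))
        0 0
        (Matrix.of fun i j : Fin o => Real.Gamma ((i:ℝ) + (j:ℝ) + (μ + 3/2))) := by
    ext ij kl
    rcases ij with i|i <;> rcases kl with j|j <;>
      simp only [Matrix.submatrix_apply, Matrix.fromBlocks_apply₁₁, Matrix.fromBlocks_apply₁₂,
        Matrix.fromBlocks_apply₂₁, Matrix.fromBlocks_apply₂₂, Matrix.of_apply, hE1, hE2,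
        Matrix.zero_apply]
    · rw [show 2*(i:ℕ) + 2*(j:ℕ) = 2*((i:ℕ)+(j:ℕ)) by ring, mom_even hμ]
      congr 1
      push_cast
      ring
    · rw [show 2*(i:ℕ) + (2*(j:ℕ)+1) = 2*((i:ℕ)+(j:ℕ))+1 by ring, mom_odd hμ]
    · rw [show 2*(i:ℕ)+1 + 2*(j:ℕ) = 2*((i:ℕ)+(j:ℕ))+1 by ring, mom_odd hμ]
    · rw [show 2*(i:ℕ)+1 + (2*(j:ℕ)+1) = 2*((i:ℕ)+(j:ℕ)+1) by ring, mom_even hμ]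
      congr 1
      push_cast
      ring
  rw [hblocks, Matrix.det_fromBlocks_zero₂₁,
    det_gamma_hankel e (μ + 1/2) (by linarith), det_gamma_hankel o (μ + 3/2) (by linarith)]

lemma gam_prod (μ : ℝ) (n : ℕ) : ∏ k ∈ range n, gam μ k =
    (∏ k ∈ range ((n+1)/2), (Nat.factorial k : ℝ) * Real.Gamma ((k:ℝ) + (μ + 1/2))) *
    (∏ k ∈ range (n/2), (Nat.factorial k : ℝ) * Real.Gamma ((k:ℝ) + (μ + 3/2))) := by
  induction n with
  | zero => simp
  | succ n ih =>
    rw [Finset.prod_range_succ, ih]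
    rcases Nat.even_or_odd n with ⟨t, ht⟩ | ⟨t, ht⟩
    · have h1 : (n+1+1)/2 = t+1 := by omega
      have h2 : (n+1)/2 = t := by omega
      have h3 : n/2 = t := by omega
      have hg : gam μ n = (Nat.factorial t : ℝ) * Real.Gamma ((t:ℝ) + (μ + 1/2)) := by
        rw [gam, if_pos (show n % 2 = 0 by omega), show n/2 = t by omega, add_assoc]
      rw [h1, h2, h3, Finset.prod_range_succ, hg]
      ring
    · have h1 : (n+1+1)/2 = t+1 := by omega
      have h2 : (n+1)/2 = t+1 := by omega
      have h3 : n/2 = t := by omega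
      have h4 : (n+1)/2 = t + 1 := by omega
      have hg : gam μ n = (Nat.factorial t : ℝ) * Real.Gamma ((t:ℝ) + (μ + 3/2)) := by
        rw [gam, if_neg (show ¬ n % 2 = 0 by omega), show n/2 = t by omega, add_assoc]
      rw [h1, h2, h3, hg]
      conv_rhs => rw [Finset.prod_range_succ
        (fun k => (Nat.factorial k : ℝ) * Real.Gamma ((k:ℝ) + (μ + 3/2))) t]
      ring

open Equiv in
include hμ in
lemma integral_expand (n : ℕ) :
    (∫ x : Fin n → ℝ,
        Real.exp (-∑ i, (x i) ^ 2) * (∏ i, |x i| ^ (2 * μ)) *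
          ∏ i : Fin n, ∏ j ∈ Finset.Ioi i, (x i - x j) ^ 2) =
      ∑ σ : Equiv.Perm (Fin n), ∑ τ : Equiv.Perm (Fin n),
        (((Equiv.Perm.sign σ : ℤ) : ℝ) * ((Equiv.Perm.sign τ : ℤ) : ℝ)) *
          ∏ i, mom μ ((σ i : ℕ) + (τ i : ℕ)) := by
  have hptw : ∀ x : Fin n → ℝ,
      Real.exp (-∑ i, (x i) ^ 2) * (∏ i, |x i| ^ (2 * μ)) *
        ∏ i : Fin n, ∏ j ∈ Finset.Ioi i, (x i - x j) ^ 2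
      = ∑ σ : Perm (Fin n), ∑ τ : Perm (Fin n),
          (((Perm.sign σ : ℤ):ℝ) * ((Perm.sign τ : ℤ):ℝ)) *
            ∏ i, (x i ^ ((σ i : ℕ) + (τ i : ℕ)) * wfun μ (x i)) := by
    intro x
    have hw : Real.exp (-∑ i, (x i)^2) * (∏ i, |x i| ^ (2*μ)) = ∏ i, wfun μ (x i) := by
      rw [show -∑ i, (x i)^2 = ∑ i, -((x i)^2) from (Finset.sum_neg_distrib _).symm,
        Real.exp_sum, ← Finset.prod_mul_distrib]
      exact Finset.prod_congr rfl (fun i _ => by rw [wfun]; ring)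
    have hv : (∏ i : Fin n, ∏ j ∈ Finset.Ioi i, (x i - x j)^2) =
        (Matrix.det (Matrix.vandermonde x))^2 := by
      rw [Matrix.det_vandermonde, ← Finset.prod_pow]
      refine Finset.prod_congr rfl (fun i _ => ?_)
      rw [← Finset.prod_pow]
      exact Finset.prod_congr rfl (fun j _ => by rw [← neg_sub, neg_sq])
    have hdet : Matrix.det (Matrix.vandermonde x) =
        ∑ σ : Perm (Fin n), ((Perm.sign σ : ℤ):ℝ) * ∏ i, x i ^ ((σ i : ℕ)) := by
      rw [← Matrix.det_transpose, Matrix.det_apply']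
      exact Finset.sum_congr rfl (fun σ _ => by simp [Matrix.vandermonde])
    have hkey : ∀ (a b P Q W : ℝ), W * ((a*P) * (b*Q)) = (a*b) * (P*(Q*W)) :=
      fun a b P Q W => by ring
    rw [hw, hv, hdet, sq, Finset.sum_mul_sum, Finset.mul_sum]
    refine Finset.sum_congr rfl (fun σ _ => ?_)
    rw [Finset.mul_sum]
    refine Finset.sum_congr rfl (fun τ _ => ?_)
    rw [hkey]
    congr 1
    rw [← Finset.prod_mul_distrib, ← Finset.prod_mul_distrib]
    exact Finset.prod_congr rfl (fun i _ => by rw [pow_add]; ring)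
  have hterm : ∀ σ τ : Perm (Fin n),
      Integrable (fun x : Fin n → ℝ =>
        (((Perm.sign σ : ℤ):ℝ) * ((Perm.sign τ : ℤ):ℝ)) *
          ∏ i, (x i ^ ((σ i : ℕ) + (τ i : ℕ)) * wfun μ (x i))) := by
    intro σ τ
    exact (Integrable.fintype_prod
      (f := fun (i : Fin n) (t : ℝ) => t ^ ((σ i : ℕ) + (τ i : ℕ)) * wfun μ t)
      (fun i => mom_integrable hμ _)).const_mul _
  rw [integral_congr_ae (Eventually.of_forall hptw),
    integral_finset_sum _ (fun σ _ => integrable_finset_sum _ (fun τ _ => hterm σ τ))]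
  refine Finset.sum_congr rfl (fun σ _ => ?_)
  rw [integral_finset_sum _ (fun τ _ => hterm σ τ)]
  refine Finset.sum_congr rfl (fun τ _ => ?_)
  rw [integral_const_mul, integral_fintype_prod_volume_eq_prod
    (f := fun (i : Fin n) (t : ℝ) => t ^ ((σ i : ℕ) + (τ i : ℕ)) * wfun μ t)]
  rfl

open Equiv in
lemma sum_perm_eq (n : ℕ) :
    (∑ σ : Perm (Fin n), ∑ τ : Perm (Fin n),
        (((Perm.sign σ : ℤ):ℝ) * ((Perm.sign τ : ℤ):ℝ)) *
          ∏ i, mom μ ((σ i : ℕ) + (τ i : ℕ)))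
    = (Nat.factorial n : ℝ) *
        Matrix.det (Matrix.of fun i j : Fin n => mom μ ((i:ℕ)+(j:ℕ))) := by
  have hsq : ∀ σ : Perm (Fin n), ((Perm.sign σ : ℤ):ℝ) * ((Perm.sign σ : ℤ):ℝ) = 1 := by
    intro σ
    rcases Int.units_eq_one_or (Perm.sign σ) with h | h <;> rw [h] <;> norm_num
  have h1 : ∀ σ : Perm (Fin n),
      (∑ τ : Perm (Fin n), (((Perm.sign σ : ℤ):ℝ) * ((Perm.sign τ : ℤ):ℝ)) *
        ∏ i, mom μ ((σ i : ℕ) + (τ i : ℕ)))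
      = Matrix.det (Matrix.of fun i j : Fin n => mom μ ((i:ℕ)+(j:ℕ))) := by
    intro σ
    rw [← Equiv.sum_comp (Equiv.mulRight σ)
      (fun τ : Perm (Fin n) => (((Perm.sign σ : ℤ):ℝ) * ((Perm.sign τ : ℤ):ℝ)) *
        ∏ i, mom μ ((σ i : ℕ) + (τ i : ℕ)))]
    rw [Matrix.det_apply']
    refine Finset.sum_congr rfl (fun ρ _ => ?_)
    have hmulapp : ∀ i, ((Equiv.mulRight σ ρ) i) = ρ (σ i) := fun i => rfl
    have hsign : ((Perm.sign (Equiv.mulRight σ ρ) : ℤ):ℝ)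
        = ((Perm.sign ρ : ℤ):ℝ) * ((Perm.sign σ : ℤ):ℝ) := by
      simp [Equiv.Perm.sign_mul]
    have hprod : (∏ i, mom μ ((σ i : ℕ) + (((Equiv.mulRight σ ρ) i) : ℕ)))
        = ∏ i : Fin n, mom μ ((i : ℕ) + ((ρ i) : ℕ)) := by
      simp_rw [hmulapp]
      exact Equiv.prod_comp σ (fun j : Fin n => mom μ ((j : ℕ) + ((ρ j) : ℕ)))
    rw [hsign, hprod]
    rw [show ((Perm.sign σ : ℤ):ℝ) * (((Perm.sign ρ : ℤ):ℝ) * ((Perm.sign σ : ℤ):ℝ))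
      = ((Perm.sign ρ : ℤ):ℝ) * (((Perm.sign σ : ℤ):ℝ) * ((Perm.sign σ : ℤ):ℝ)) from by ring,
      hsq, mul_one]
    congr 1
    exact Finset.prod_congr rfl (fun i _ => by rw [Matrix.of_apply, add_comm])
  rw [Finset.sum_congr rfl (fun σ _ => h1 σ), Finset.sum_const, Finset.card_univ,
    Fintype.card_perm, Fintype.card_fin, nsmul_eq_mul]


theorem stmt_15 (n : ℕ) (hn : 1 ≤ n) (μ : ℝ) (hμ : -(1 / 2) < μ) :
    (∫ x : Fin n → ℝ,
        Real.exp (-∑ i, (x i) ^ 2) * (∏ i, |x i| ^ (2 * μ)) *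
          ∏ i : Fin n, ∏ j ∈ Finset.Ioi i, (x i - x j) ^ 2) =
      (Nat.factorial n : ℝ) * ∏ k ∈ Finset.range n, gam μ k := by
  rw [integral_expand hμ n, sum_perm_eq n, det_mom hμ n, ← gam_prod μ n]
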